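/- Every lattice (L, ‖·‖) over A = k[t] admits a reduced basis, i.e. an A-basis B such that ‖Σ_{b∈B} a_b b‖ = max_{b∈B}(deg(a_b) + ‖b‖) for all coefficients a_b ∈ A. -/

import Mathlib

/-- The degree function on `A = k[t]`, with `deg 0 = -∞`, valued in `ℝ ∪ {-∞}`. -/
noncomputable def degA {k : Type*} [Field k] (a : Polynomial k) : WithBot ℝ :=
  WithBot.map (fun n : ℕ => (n : ℝ)) a.degree

set_option linter.unusedSectionVars false

namespace Stmt8Aux

open Polynomial

lemma degA_zero {k : Type*} [Field k] : degA (0 : Polynomial k) = ⊥ := by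
  simp [degA]

lemma degA_eq_bot_iff {k : Type*} [Field k] {a : Polynomial k} : degA a = ⊥ ↔ a = 0 := by
  rw [degA, WithBot.map_eq_bot_iff, Polynomial.degree_eq_bot]

lemma degA_eq_zero {k : Type*} [Field k] {a : Polynomial k} (h : a.degree = 0) :
    degA a = 0 := by
  simp [degA, h]

lemma degA_lt {k : Type*} [Field k] {p q : Polynomial k} (h : p.degree < q.degree) :
    degA p < degA q := by
  unfold degA
  rcases hq : q.degree with _ | n
  · rw [hq] at h; exact absurd h (not_lt_bot (a := p.degree))
  rcases hp : p.degree with _ | m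
  · exact WithBot.bot_lt_coe _
  · rw [hp, hq] at h
    rw [WithBot.some_eq_coe, WithBot.some_eq_coe] at h
    exact WithBot.coe_lt_coe.2 (Nat.cast_lt.2 (WithBot.coe_lt_coe.1 h))

section Norm

variable {k : Type*} [Field k] {L : Type*} [AddCommGroup L]
  [Module (Polynomial k) L] [Module k L] [IsScalarTower k (Polynomial k) L]
  {N : L → WithBot ℝ}

lemma N_zero (hzero : ∀ x : L, N x = ⊥ ↔ x = 0) : N 0 = ⊥ := (hzero 0).2 rfl

lemma N_neg (hsmul : ∀ (a : Polynomial k) (x : L), N (a • x) = degA a + N x) (x : L) :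
    N (-x) = N x := by
  have h1 : (-x) = (-1 : Polynomial k) • x := (neg_one_smul _ x).symm
  have h2 : degA (-1 : Polynomial k) = 0 :=
    degA_eq_zero (by rw [Polynomial.degree_neg, Polynomial.degree_one])
  rw [h1, hsmul, h2, zero_add]

lemma N_sum_le (hadd : ∀ x y : L, N (x + y) ≤ max (N x) (N y))
    (hzero : ∀ x : L, N x = ⊥ ↔ x = 0) {ι : Type*} (s : Finset ι) (f : ι → L) :
    N (∑ i ∈ s, f i) ≤ s.sup (fun i => N (f i)) := by
  classical
  induction s using Finset.induction_on with
  | empty => simp [N_zero hzero]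
  | insert _ _ ha ih =>
    rw [Finset.sum_insert ha, Finset.sup_insert]
    exact (hadd _ _).trans (by exact max_le_max le_rfl ih)

lemma N_add_eq_right (hadd : ∀ x y : L, N (x + y) ≤ max (N x) (N y))
    (hsmul : ∀ (a : Polynomial k) (x : L), N (a • x) = degA a + N x)
    {x y : L} (h : N x < N y) : N (x + y) = N y := by
  refine le_antisymm ((hadd x y).trans (max_le h.le le_rfl)) ?_
  by_contra hlt
  push_neg at hlt
  have h1 : N y ≤ max (N (-x)) (N (x + y)) := by
    have h2 := hadd (-x) (x + y)
    rw [neg_add_cancel_left] at h2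
    exact h2
  rw [N_neg hsmul] at h1
  exact absurd (h1.trans_lt (max_lt h hlt)) (lt_irrefl _)

lemma N_smul_k (hsmul : ∀ (a : Polynomial k) (x : L), N (a • x) = degA a + N x)
    {c : k} (hc : c ≠ 0) (x : L) : N (c • x) = N x := by
  rw [← algebraMap_smul (Polynomial k) c x, hsmul]
  have : algebraMap k (Polynomial k) c = Polynomial.C c := rfl
  rw [this, degA_eq_zero (Polynomial.degree_C hc), zero_add]

lemma finite_values (hadd : ∀ x y : L, N (x + y) ≤ max (N x) (N y))
    (hsmul : ∀ (a : Polynomial k) (x : L), N (a • x) = degA a + N x)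
    (hzero : ∀ x : L, N x = ⊥ ↔ x = 0)
    (hfin : ∀ r : ℝ, ∃ S : Finset L,
      {x : L | N x ≤ (r : ℝ)} ⊆ (Submodule.span k (S : Set L) : Set L))
    (r : ℝ) : {v : ℝ | (∃ x : L, N x = (v : WithBot ℝ)) ∧ v ≤ r}.Finite := by
  classical
  obtain ⟨S, hS⟩ := hfin r
  set W := Submodule.span k (S : Set L) with hW
  haveI : FiniteDimensional k W := FiniteDimensional.span_finset k S
  set V := {v : ℝ | (∃ x : L, N x = (v : WithBot ℝ)) ∧ v ≤ r} with hV
  have hch : ∀ v : V, ∃ x : L, N x = ((v : ℝ) : WithBot ℝ) := fun v => v.2.1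
  choose f hf using hch
  have hfW : ∀ v, f v ∈ W := fun v =>
    hS (by rw [Set.mem_setOf_eq, hf v]; exact_mod_cast v.2.2)
  have hli : LinearIndependent k f := by
    rw [linearIndependent_iff']
    intro s g hsum v hv
    by_contra hgv
    set s' := s.filter (fun w => g w ≠ 0) with hs'
    have hvs' : v ∈ s' := Finset.mem_filter.2 ⟨hv, hgv⟩
    have hne : s'.Nonempty := ⟨v, hvs'⟩
    set vm := s'.max' hne with hvm
    have hvmmem : vm ∈ s' := s'.max'_mem hne
    have hgvm : g vm ≠ 0 := (Finset.mem_filter.1 hvmmem).2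
    have hsum' : ∑ w ∈ s', g w • f w = 0 := by
      rw [hs', Finset.sum_filter_of_ne]
      · exact hsum
      · intro w _ hw0
        intro hgw
        exact hw0 (by rw [hgw, zero_smul])
    have hsplit : g vm • f vm + ∑ w ∈ s'.erase vm, g w • f w = 0 :=
      (Finset.add_sum_erase s' (fun w => g w • f w) hvmmem).trans hsum'
    have hNrest : N (∑ w ∈ s'.erase vm, g w • f w) < (((vm : ℝ)) : WithBot ℝ) := by
      refine lt_of_le_of_lt (N_sum_le hadd hzero _ _) ?_
      rw [Finset.sup_lt_iff (WithBot.bot_lt_coe _)]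
      intro w hw
      have hw' := Finset.mem_of_mem_erase hw
      have hgw : g w ≠ 0 := (Finset.mem_filter.1 hw').2
      rw [N_smul_k hsmul hgw, hf]
      have hwlt : (w : ℝ) < (vm : ℝ) := by
        have hle : w ≤ vm := Finset.le_max' s' w hw'
        have hne2 : w ≠ vm := Finset.ne_of_mem_erase hw
        exact lt_of_le_of_ne hle (fun hc => hne2 (Subtype.ext hc))
      exact_mod_cast hwlt
    have hNterm : N (g vm • f vm) = (((vm : ℝ)) : WithBot ℝ) := by
      rw [N_smul_k hsmul hgvm, hf]
    have h0 : N ((∑ w ∈ s'.erase vm, g w • f w) + g vm • f vm) = (((vm : ℝ)) : WithBot ℝ) := by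
      rw [N_add_eq_right hadd hsmul (hNrest.trans_eq hNterm.symm), hNterm]
    rw [add_comm] at h0
    rw [hsplit, N_zero hzero] at h0
    exact absurd h0.symm (by simp)
  have hliW : LinearIndependent k (fun v : V => (⟨f v, hfW v⟩ : W)) := by
    apply LinearIndependent.of_comp W.subtype
    exact hli
  have hVfin : Finite V := by
    have := hliW.lt_aleph0_of_finite
    exact Cardinal.lt_aleph0_iff_finite.mp (by simpa using this)
  exact Set.finite_coe_iff.mp hVfin

lemma exists_min (hadd : ∀ x y : L, N (x + y) ≤ max (N x) (N y))
    (hsmul : ∀ (a : Polynomial k) (x : L), N (a • x) = degA a + N x)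
    (hzero : ∀ x : L, N x = ⊥ ↔ x = 0)
    (hfin : ∀ r : ℝ, ∃ S : Finset L,
      {x : L | N x ≤ (r : ℝ)} ⊆ (Submodule.span k (S : Set L) : Set L))
    (S : Set L) (hS : S.Nonempty) : ∃ b ∈ S, ∀ y ∈ S, N b ≤ N y := by
  classical
  by_cases hbot : ∃ y ∈ S, N y = ⊥
  · obtain ⟨y, hy, hNy⟩ := hbot
    exact ⟨y, hy, fun z _ => by rw [hNy]; exact bot_le⟩
  push_neg at hbot
  obtain ⟨x₀, hx₀⟩ := hS
  rcases h0 : N x₀ with _ | r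
  · exact absurd h0 (hbot x₀ hx₀)
  have hfinT : {v : ℝ | (∃ y ∈ S, N y = (v : WithBot ℝ)) ∧ v ≤ r}.Finite :=
    (finite_values hadd hsmul hzero hfin r).subset
      (fun v hv => ⟨hv.1.imp (fun y hy => hy.2), hv.2⟩)
  have hTne : r ∈ {v : ℝ | (∃ y ∈ S, N y = (v : WithBot ℝ)) ∧ v ≤ r} :=
    ⟨⟨x₀, hx₀, h0⟩, le_refl r⟩
  have hFne : hfinT.toFinset.Nonempty := ⟨r, (Set.Finite.mem_toFinset _).2 hTne⟩
  have hmT := (Set.Finite.mem_toFinset hfinT).1 (hfinT.toFinset.min'_mem hFne)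
  obtain ⟨⟨b, hbS, hbN⟩, hmr⟩ := hmT
  refine ⟨b, hbS, fun y hy => ?_⟩
  rcases hNy : N y with _ | v
  · exact absurd hNy (hbot y hy)
  rw [WithBot.some_eq_coe] at hNy
  have hmv : hfinT.toFinset.min' hFne ≤ v := by
    by_cases hvr : v ≤ r
    · exact hfinT.toFinset.min'_le v
        ((Set.Finite.mem_toFinset hfinT).2 ⟨⟨y, hy, hNy⟩, hvr⟩)
    · exact hmr.trans (le_of_not_ge hvr)
  rw [hbN]
  exact WithBot.coe_le_coe.2 hmv

end Norm

lemma sup_univ_succ {α : Type*} [SemilatticeSup α] [OrderBot α] {n : ℕ} (f : Fin (n + 1) → α) :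
    Finset.univ.sup f = f 0 ⊔ Finset.univ.sup (fun i : Fin n => f i.succ) := by
  rw [Fin.univ_succ, Finset.sup_cons, Finset.sup_map]
  rfl

lemma trivial_case {k : Type*} [Field k] {L : Type*} [AddCommGroup L]
    [Module (Polynomial k) L] (N : L → WithBot ℝ)
    (hzero : ∀ x : L, N x = ⊥ ↔ x = 0) (hL : ∀ x : L, x = 0) :
    ∃ (m : ℕ) (b : Fin m → L),
      Submodule.span (Polynomial k) (Set.range b) = ⊤ ∧
      ∀ a : Fin m → Polynomial k,
        N (∑ i, a i • b i) = Finset.univ.sup (fun i => degA (a i) + N (b i)) := by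
  refine ⟨0, Fin.elim0, ?_, ?_⟩
  · haveI : Subsingleton L := ⟨fun a b => by rw [hL a, hL b]⟩
    exact Subsingleton.elim _ _
  · intro a
    rw [Finset.univ_eq_empty, Finset.sum_empty, Finset.sup_empty, N_zero hzero]

universe u v

theorem main (n : ℕ) : ∀ {k : Type u} [Field k] {L : Type v} [AddCommGroup L]
    [Module (Polynomial k) L] [Module k L] [IsScalarTower k (Polynomial k) L]
    [Module.Finite (Polynomial k) L] (N : L → WithBot ℝ),
    (∀ x y : L, N (x + y) ≤ max (N x) (N y)) →
    (∀ (a : Polynomial k) (x : L), N (a • x) = degA a + N x) →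
    (∀ x : L, N x = ⊥ ↔ x = 0) →
    (∀ r : ℝ, ∃ S : Finset L,
      {x : L | N x ≤ (r : ℝ)} ⊆ (Submodule.span k (S : Set L) : Set L)) →
    Module.finrank (Polynomial k) L ≤ n →
    ∃ (m : ℕ) (b : Fin m → L),
      Submodule.span (Polynomial k) (Set.range b) = ⊤ ∧
      ∀ a : Fin m → Polynomial k,
        N (∑ i, a i • b i) = Finset.univ.sup (fun i => degA (a i) + N (b i)) := by
  induction n with
  | zero =>
    intro k _ L _ _ _ _ _ N hadd hsmul hzero hfin hrank
    haveI hnzd : NoZeroSMulDivisors (Polynomial k) L := ⟨fun {a x} h => by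
      have h1 := (hzero _).2 h
      rw [hsmul] at h1
      rcases WithBot.add_eq_bot.mp h1 with h' | h'
      · exact Or.inl (degA_eq_bot_iff.mp h')
      · exact Or.inr ((hzero x).1 h')⟩
    apply trivial_case N hzero
    intro x
    by_contra hx
    have hli : LinearIndependent (Polynomial k) (fun _ : Fin 1 => x) := by
      rw [Fintype.linearIndependent_iff]
      intro g hg i
      rw [Fin.sum_univ_one] at hg
      rcases smul_eq_zero.mp hg with h' | h'
      · exact Fin.cases h' (fun j => j.elim0) i
      · exact absurd h' hx
    have h1 := hli.fintype_card_le_finrank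
    simp only [Fintype.card_fin] at h1
    omega
  | succ n IH =>
    intro k _ L _ _ _ _ _ N hadd hsmul hzero hfin hrank
    classical
    haveI hnzd : NoZeroSMulDivisors (Polynomial k) L := ⟨fun {a x} h => by
      have h1 := (hzero _).2 h
      rw [hsmul] at h1
      rcases WithBot.add_eq_bot.mp h1 with h' | h'
      · exact Or.inl (degA_eq_bot_iff.mp h')
      · exact Or.inr ((hzero x).1 h')⟩
    by_cases hL : ∀ x : L, x = 0
    · exact trivial_case N hzero hL
    push_neg at hL
    obtain ⟨b₁, hb₁S, hb₁min⟩ := exists_min hadd hsmul hzero hfin {x : L | x ≠ 0} hL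
    have hb₁ne : b₁ ≠ 0 := hb₁S
    set P : Submodule (Polynomial k) L := Submodule.span (Polynomial k) {b₁} with hP
    have hmkb : P.mkQ b₁ = 0 := by
      rw [Submodule.mkQ_apply, Submodule.Quotient.mk_eq_zero]
      exact Submodule.mem_span_singleton_self b₁
    have hrepex : ∀ z : L ⧸ P,
        ∃ w ∈ {x : L | P.mkQ x = z}, ∀ y ∈ {x : L | P.mkQ x = z}, N w ≤ N y := by
      intro z
      obtain ⟨x, hx⟩ := Submodule.mkQ_surjective P z
      exact exists_min hadd hsmul hzero hfin _ ⟨x, hx⟩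
    choose rep hrep hmin using hrepex
    have hrepeq : ∀ z : L ⧸ P, P.mkQ (rep z) = z := fun z => hrep z
    set N' : (L ⧸ P) → WithBot ℝ := fun z => N (rep z) with hN'
    have hN'le : ∀ x : L, N' (P.mkQ x) ≤ N x := fun x => hmin _ x rfl
    have hN'zero : ∀ z, N' z = ⊥ ↔ z = 0 := by
      intro z
      constructor
      · intro h
        have hz : rep z = 0 := (hzero _).1 h
        rw [← hrep z, hz, map_zero]
      · intro h
        subst h
        have := hN'le 0
        rw [map_zero, N_zero hzero] at this
        exact le_bot_iff.mp this
    have hN'b₁ : ∀ z : L ⧸ P, z ≠ 0 → N b₁ ≤ N' z := by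
      intro z hz
      refine hb₁min (rep z) ?_
      intro h0
      exact hz (by rw [← hrep z, h0, map_zero])
    have hN'add : ∀ z w, N' (z + w) ≤ max (N' z) (N' w) := by
      intro z w
      have h1 : P.mkQ (rep z + rep w) = z + w := by rw [map_add, hrep, hrep]
      exact (hmin (z + w) _ h1).trans (hadd _ _)
    have hN'smul : ∀ (a : Polynomial k) (z), N' (a • z) = degA a + N' z := by
      intro a z
      by_cases ha : a = 0
      · subst ha
        rw [zero_smul, (hN'zero 0).2 rfl, degA_zero, WithBot.bot_add]
      by_cases hz : z = 0
      · subst hz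
        rw [smul_zero, (hN'zero 0).2 rfl, WithBot.add_bot]
      apply le_antisymm
      · have h1 : P.mkQ (a • rep z) = a • z := by rw [map_smul, hrep]
        calc N' (a • z) ≤ N (a • rep z) := hmin _ _ h1
          _ = degA a + N' z := hsmul a _
      · have hmem : rep (a • z) - a • rep z ∈ P := by
          have h2 : P.mkQ (rep (a • z) - a • rep z) = 0 := by
            rw [map_sub, map_smul, hrep, hrep, sub_self]
          rwa [← LinearMap.mem_ker, Submodule.ker_mkQ] at h2
        obtain ⟨c, hc⟩ := Submodule.mem_span_singleton.mp hmem
        have hcs : c = a * (c / a) + c % a := (EuclideanDomain.div_add_mod c a).symm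
        have hwrep : rep (a • z) = a • (rep z + (c / a) • b₁) + (c % a) • b₁ := by
          have h3 : rep (a • z) = c • b₁ + a • rep z := sub_eq_iff_eq_add.mp hc.symm
          rw [h3]
          nth_rewrite 1 [hcs]
          rw [add_smul, mul_smul, smul_add]
          abel
        have hq' : P.mkQ (rep z + (c / a) • b₁) = z := by
          rw [map_add, hrep, map_smul, hmkb, smul_zero, add_zero]
        have h2 : degA a + N' z ≤ N (a • (rep z + (c / a) • b₁)) := by
          rw [hsmul]
          exact add_le_add le_rfl (hmin z _ hq')
        have hgoal : degA a + N' z ≤ N (rep (a • z)) := by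
          by_cases hs : c % a = 0
          · rw [hwrep, hs, zero_smul, add_zero]
            exact h2
          · have hsdeg : degA (c % a) < degA a := degA_lt (EuclideanDomain.mod_lt c ha)
            have hNb : N b₁ ≠ ⊥ := fun h => hb₁ne ((hzero _).1 h)
            have h3 : N ((c % a) • b₁) < degA a + N' z := by
              rw [hsmul]
              calc degA (c % a) + N b₁ < degA a + N b₁ :=
                    WithBot.add_lt_add_right hNb hsdeg
                _ ≤ degA a + N' z := add_le_add le_rfl (hN'b₁ z hz)
            have h4 : N ((c % a) • b₁) < N (a • (rep z + (c / a) • b₁)) := h3.trans_le h2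
            rw [hwrep, add_comm (a • (rep z + (c / a) • b₁)) ((c % a) • b₁),
              N_add_eq_right hadd hsmul h4]
            exact h2
        exact hgoal
    have hN'fin : ∀ r : ℝ, ∃ S' : Finset (L ⧸ P),
        {z : L ⧸ P | N' z ≤ (r : ℝ)} ⊆
          (Submodule.span k (S' : Set (L ⧸ P)) : Set (L ⧸ P)) := by
      intro r
      obtain ⟨S, hS⟩ := hfin r
      refine ⟨S.image (P.mkQ), ?_⟩
      intro z hz
      have h1 : rep z ∈ Submodule.span k (S : Set L) := hS hz
      have h2 : z = (P.mkQ.restrictScalars k) (rep z) := (hrep z).symm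
      have h3 : z ∈ Submodule.map (P.mkQ.restrictScalars k) (Submodule.span k (S : Set L)) :=
        h2 ▸ Submodule.mem_map_of_mem h1
      rw [Submodule.map_span] at h3
      simpa [Finset.coe_image] using h3
    haveI hnzdQ : NoZeroSMulDivisors (Polynomial k) (L ⧸ P) := ⟨fun {a z} h => by
      have h1 := (hN'zero _).2 h
      rw [hN'smul] at h1
      rcases WithBot.add_eq_bot.mp h1 with h' | h'
      · exact Or.inl (degA_eq_bot_iff.mp h')
      · exact Or.inr ((hN'zero z).1 h')⟩
    haveI : Module.Free (Polynomial k) (L ⧸ P) := Module.free_of_finite_type_torsion_free'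
    set ι := Module.Free.ChooseBasisIndex (Polynomial k) (L ⧸ P) with hι
    let c : Module.Basis ι (Polynomial k) (L ⧸ P) := Module.Free.chooseBasis _ _
    let e : Fin (Fintype.card ι) ≃ ι := (Fintype.equivFin ι).symm
    set F : Fin (Fintype.card ι + 1) → L :=
      Fin.cons b₁ (fun i => rep (c (e i))) with hFdef
    have hFli : LinearIndependent (Polynomial k) F := by
      rw [Fintype.linearIndependent_iff]
      intro g hg
      have hgq : ∑ i : Fin (Fintype.card ι), g i.succ • c (e i) = 0 := by
        have h5 := congrArg P.mkQ hg
        rw [map_sum, map_zero] at h5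
        simp only [map_smul] at h5
        rw [Fin.sum_univ_succ] at h5
        simp only [hFdef, Fin.cons_zero, Fin.cons_succ, hmkb, smul_zero, zero_add] at h5
        simpa only [hrepeq] using h5
      have hbind := (c.reindex e.symm).linearIndependent
      have h6 : ∀ i : Fin (Fintype.card ι), g i.succ = 0 :=
        fun i => Fintype.linearIndependent_iff.1 hbind (fun i => g i.succ) (by
          simpa only [Module.Basis.reindex_apply, Equiv.symm_symm] using hgq) i
      have h7 : g 0 • b₁ = 0 := by
        rw [Fin.sum_univ_succ] at hg
        simp only [hFdef, Fin.cons_zero, Fin.cons_succ] at hg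
        calc g 0 • b₁ = g 0 • b₁ + ∑ i : Fin (Fintype.card ι),
              g i.succ • rep (c (e i)) := by
              rw [Finset.sum_eq_zero (fun i _ => by rw [h6 i, zero_smul]), add_zero]
          _ = 0 := hg
      have h8 : g 0 = 0 := by
        rcases smul_eq_zero.mp h7 with h' | h'
        · exact h'
        · exact absurd h' hb₁ne
      intro i
      refine Fin.cases h8 (fun j => h6 j) i
    have hcard : Fintype.card ι + 1 ≤ Module.finrank (Polynomial k) L := by
      have := hFli.fintype_card_le_finrank
      simpa using this
    have hrankQ : Module.finrank (Polynomial k) (L ⧸ P) ≤ n := by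
      have h9 : Module.finrank (Polynomial k) (L ⧸ P) = Fintype.card ι :=
        Module.finrank_eq_card_basis c
      omega
    obtain ⟨m, b', hspan', hnorm'⟩ := IH N' hN'add hN'smul hN'zero hN'fin hrankQ
    set g : Fin m → L := fun i => rep (b' i) with hgdef
    have hgN : ∀ i, N (g i) = N' (b' i) := fun i => rfl
    have hgmk : ∀ i, P.mkQ (g i) = b' i := fun i => hrep _
    refine ⟨m + 1, Fin.cons b₁ g, ?_, ?_⟩
    · rw [eq_top_iff]
      rintro x -
      have hmapeq : Submodule.map P.mkQ (Submodule.span (Polynomial k) (Set.range g)) = ⊤ := by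
        rw [Submodule.map_span, ← Set.range_comp]
        have hcomp : (⇑P.mkQ ∘ g) = b' := funext hgmk
        rw [hcomp, hspan']
      have hx : P.mkQ x ∈ Submodule.map P.mkQ (Submodule.span (Polynomial k) (Set.range g)) := by
        rw [hmapeq]; trivial
      obtain ⟨y, hy, hyx⟩ := Submodule.mem_map.mp hx
      have hxy : x - y ∈ P := by
        have h10 : P.mkQ (x - y) = 0 := by rw [map_sub, hyx, sub_self]
        rwa [← LinearMap.mem_ker, Submodule.ker_mkQ] at h10
      have h11 : y ∈ Submodule.span (Polynomial k) (Set.range (Fin.cons b₁ g : Fin (m+1) → L)) := by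
        refine Submodule.span_mono ?_ hy
        rintro _ ⟨i, rfl⟩
        exact ⟨i.succ, Fin.cons_succ _ _ _⟩
      have h12 : x - y ∈ Submodule.span (Polynomial k)
          (Set.range (Fin.cons b₁ g : Fin (m+1) → L)) := by
        have hPle : P ≤ Submodule.span (Polynomial k)
            (Set.range (Fin.cons b₁ g : Fin (m+1) → L)) := by
          rw [hP, Submodule.span_le, Set.singleton_subset_iff]
          exact Submodule.subset_span ⟨0, Fin.cons_zero _ _⟩
        exact hPle hxy
      have := Submodule.add_mem _ h12 h11
      rwa [sub_add_cancel] at this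
    · intro a
      set M' := Finset.univ.sup (fun i : Fin m => degA (a i.succ) + N (g i)) with hM'
      have hsum : ∑ i, a i • (Fin.cons b₁ g : Fin (m+1) → L) i
          = a 0 • b₁ + ∑ i : Fin m, a i.succ • g i := by
        rw [Fin.sum_univ_succ]
        simp only [Fin.cons_zero, Fin.cons_succ]
      set y := ∑ i : Fin m, a i.succ • g i with hy
      have hyle : N y ≤ M' := by
        refine (N_sum_le hadd hzero _ _).trans ?_
        refine Finset.sup_le (fun i _ => ?_)
        rw [hsmul, hM']
        exact Finset.le_sup (f := fun i : Fin m => degA (a i.succ) + N (g i))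
          (Finset.mem_univ i)
      have hmky : P.mkQ y = ∑ i : Fin m, a i.succ • b' i := by
        rw [hy, map_sum]
        simp only [map_smul, hgmk]
      have hNmk : N' (P.mkQ y) = M' := by
        rw [hmky, hnorm' (fun i => a i.succ)]
      have hyge : M' ≤ N y := hNmk ▸ hN'le y
      have hNy : N y = M' := le_antisymm hyle hyge
      have hsupsplit : Finset.univ.sup
          (fun i : Fin (m+1) => degA (a i) + N ((Fin.cons b₁ g : Fin (m+1) → L) i))
          = max (degA (a 0) + N b₁) M' := by
        rw [sup_univ_succ]
        simp only [Fin.cons_zero, Fin.cons_succ]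
        rfl
      rw [hsum, hsupsplit]
      rcases le_or_gt (degA (a 0) + N b₁) M' with hle | hlt
      · rw [max_eq_right hle]
        apply le_antisymm
        · refine (hadd _ _).trans ?_
          rw [hsmul, hNy]
          exact max_le hle le_rfl
        · have h13 : P.mkQ (a 0 • b₁ + y) = P.mkQ y := by
            rw [map_add, map_smul, hmkb, smul_zero, zero_add]
          calc M' = N' (P.mkQ y) := hNmk.symm
            _ = N' (P.mkQ (a 0 • b₁ + y)) := by rw [h13]
            _ ≤ N (a 0 • b₁ + y) := hN'le _
      · rw [max_eq_left hlt.le]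
        have h14 : N y < N (a 0 • b₁) := by
          rw [hNy, hsmul]
          exact hlt
        rw [add_comm (a 0 • b₁) y, N_add_eq_right hadd hsmul h14, hsmul]

end Stmt8Aux

/-- Every lattice over `A = k[t]` admits a reduced basis. -/
theorem stmt8 {k : Type*} [Field k] {L : Type*} [AddCommGroup L]
    [Module (Polynomial k) L] [Module k L] [IsScalarTower k (Polynomial k) L]
    [Module.Finite (Polynomial k) L]
    (N : L → WithBot ℝ)
    (hadd : ∀ x y : L, N (x + y) ≤ max (N x) (N y))
    (hsmul : ∀ (a : Polynomial k) (x : L), N (a • x) = degA a + N x)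
    (hzero : ∀ x : L, N x = ⊥ ↔ x = 0)
    (hfin : ∀ r : ℝ, ∃ S : Finset L,
      {x : L | N x ≤ (r : ℝ)} ⊆ (Submodule.span k (S : Set L) : Set L)) :
    ∃ (n : ℕ) (b : Fin n → L),
      Submodule.span (Polynomial k) (Set.range b) = ⊤ ∧
      ∀ a : Fin n → Polynomial k,
        N (∑ i, a i • b i) = Finset.univ.sup (fun i => degA (a i) + N (b i)) := by
  exact Stmt8Aux.main (Module.finrank (Polynomial k) L) N hadd hsmul hzero hfin le_rfl
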